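/- Let d ≥ 1, r > 0, 0 < δ < r², and let μ be a finite measure on ℝ^d. Define L(x) = Σ_{i=1}^d min(x_i², r²), the piecewise linear threshold f : ℝ → ℝ by f(t) = 1 for t < r² − δ, f(t) = (r² − t)/δ for r² − δ ≤ t ≤ r², and f(t) = 0 for t > r², and let B = {x ∈ ℝ^d : ‖x‖₂ ≤ r} and S_δ = {x ∈ ℝ^d : r² − δ ≤ ‖x‖₂² ≤ r²}. Then ∫_{ℝ^d} ( f(L(x)) − 1_B(x) )² dμ(x) ≤ μ(S_δ). -/
import Mathlib


open MeasureTheory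

noncomputable section

/-- The piecewise linear threshold: `f(t) = 1` for `t < r² − δ`, linear ramp down on
`[r² − δ, r²]`, and `f(t) = 0` for `t > r²`. -/
def rampThreshold (r δ t : ℝ) : ℝ :=
  if t < r ^ 2 - δ then 1 else if t ≤ r ^ 2 then (r ^ 2 - t) / δ else 0

lemma rampThreshold_mem (r δ t : ℝ) (hδ0 : 0 < δ) :
    rampThreshold r δ t ∈ Set.Icc (0:ℝ) 1 := by
  unfold rampThreshold
  split_ifs with h1 h2
  · exact ⟨zero_le_one, le_refl 1⟩
  · constructor
    · exact div_nonneg (by linarith) hδ0.le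
    · rw [div_le_one hδ0]; push_neg at h1; linarith
  · exact ⟨le_refl 0, zero_le_one⟩

lemma rampThreshold_eq_zero (r δ t : ℝ) (hδ0 : 0 < δ) (ht : r ^ 2 ≤ t) :
    rampThreshold r δ t = 0 := by
  unfold rampThreshold
  split_ifs with h1 h2
  · linarith
  · have : t = r ^ 2 := le_antisymm h2 ht
    simp [this]
  · rfl

/-- The squared error between the thresholded truncated square sum
`f(L(x))`, with `L(x) = Σᵢ min(xᵢ², r²)`, and the indicator of the closed ball `B_r^d`
integrates to at most the measure of the transition shell
`S_δ = {x : r² − δ ≤ ‖x‖² ≤ r²}`. -/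
theorem threshold_error_le_shell (d : ℕ) (hd : 1 ≤ d) (r δ : ℝ) (hr : 0 < r)
    (hδ0 : 0 < δ) (hδ : δ < r ^ 2) (μ : Measure (Fin d → ℝ)) [IsFiniteMeasure μ] :
    ∫ x, (rampThreshold r δ (∑ i, min (x i ^ 2) (r ^ 2)) -
        Set.indicator {y : Fin d → ℝ | Real.sqrt (∑ i, y i ^ 2) ≤ r} 1 x) ^ 2 ∂μ ≤
      (μ {x : Fin d → ℝ | r ^ 2 - δ ≤ ∑ i, x i ^ 2 ∧ ∑ i, x i ^ 2 ≤ r ^ 2}).toReal := by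
  set s : Set (Fin d → ℝ) :=
    {x : Fin d → ℝ | r ^ 2 - δ ≤ ∑ i, x i ^ 2 ∧ ∑ i, x i ^ 2 ≤ r ^ 2} with hs
  set F : (Fin d → ℝ) → ℝ := fun x =>
    (rampThreshold r δ (∑ i, min (x i ^ 2) (r ^ 2)) -
        Set.indicator {y : Fin d → ℝ | Real.sqrt (∑ i, y i ^ 2) ≤ r} 1 x) ^ 2 with hF
  have hind : ∀ x : Fin d → ℝ,
      Set.indicator {y : Fin d → ℝ | Real.sqrt (∑ i, y i ^ 2) ≤ r} 1 x ∈ Set.Icc (0:ℝ) 1 := by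
    intro x
    rw [Set.indicator_apply]
    split_ifs <;> simp
  have h1 : ∀ x ∈ s, F x ≤ 1 := by
    intro x _
    have ha := rampThreshold_mem r δ (∑ i, min (x i ^ 2) (r ^ 2)) hδ0
    have hb := hind x
    rw [hF]
    have : |rampThreshold r δ (∑ i, min (x i ^ 2) (r ^ 2)) -
        Set.indicator {y : Fin d → ℝ | Real.sqrt (∑ i, y i ^ 2) ≤ r} 1 x| ≤ 1 := by
      rw [abs_le]
      constructor <;> [linarith [ha.1, ha.2, hb.1, hb.2]; linarith [ha.1, ha.2, hb.1, hb.2]]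
    calc F x = |rampThreshold r δ (∑ i, min (x i ^ 2) (r ^ 2)) -
        Set.indicator {y : Fin d → ℝ | Real.sqrt (∑ i, y i ^ 2) ≤ r} 1 x| ^ 2 := by
          rw [sq_abs]
      _ ≤ 1 ^ 2 := by exact pow_le_pow_left₀ (abs_nonneg _) this 2
      _ = 1 := one_pow 2
  have h2 : ∀ x ∈ sᶜ, F x ≤ 0 := by
    intro x hx
    rw [hs] at hx
    simp only [Set.mem_compl_iff, Set.mem_setOf_eq, not_and_or, not_le] at hx
    have hsum_nonneg : ∀ i, (0:ℝ) ≤ x i ^ 2 := fun i => sq_nonneg _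
    rcases hx with hlt | hgt
    · -- ∑ x i ^2 < r² - δ : both terms equal 1
      have hsr : ∑ i, x i ^ 2 ≤ r ^ 2 := by linarith
      have hL : (∑ i, min (x i ^ 2) (r ^ 2)) = ∑ i, x i ^ 2 := by
        refine Finset.sum_congr rfl fun i _ => ?_
        refine min_eq_left ?_
        calc x i ^ 2 ≤ ∑ j, x j ^ 2 :=
              Finset.single_le_sum (fun j _ => hsum_nonneg j) (Finset.mem_univ i)
          _ ≤ r ^ 2 := hsr
      have hramp : rampThreshold r δ (∑ i, min (x i ^ 2) (r ^ 2)) = 1 := by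
        rw [hL]; unfold rampThreshold; rw [if_pos hlt]
      have hmem : x ∈ {y : Fin d → ℝ | Real.sqrt (∑ i, y i ^ 2) ≤ r} := by
        simp only [Set.mem_setOf_eq]
        calc Real.sqrt (∑ i, x i ^ 2) ≤ Real.sqrt (r ^ 2) := Real.sqrt_le_sqrt hsr
          _ = r := Real.sqrt_sq hr.le
      simp only [hF, hramp, Set.indicator_of_mem hmem]
      norm_num
    · -- r² < ∑ x i ^2 : both terms equal 0
      have hL : r ^ 2 ≤ ∑ i, min (x i ^ 2) (r ^ 2) := by
        by_cases h : ∀ i, x i ^ 2 ≤ r ^ 2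
        · have : (∑ i, min (x i ^ 2) (r ^ 2)) = ∑ i, x i ^ 2 :=
            Finset.sum_congr rfl fun i _ => min_eq_left (h i)
          rw [this]; linarith
        · push_neg at h
          obtain ⟨i, hi⟩ := h
          have : min (x i ^ 2) (r ^ 2) = r ^ 2 := min_eq_right hi.le
          calc r ^ 2 = min (x i ^ 2) (r ^ 2) := this.symm
            _ ≤ ∑ j, min (x j ^ 2) (r ^ 2) :=
              Finset.single_le_sum
                (fun j _ => le_min (hsum_nonneg j) (by positivity) |>.trans (le_refl _) |>.trans
                  (le_refl _) |> fun _ => le_min (hsum_nonneg j) (sq_nonneg r))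
                (Finset.mem_univ i)
      have hramp : rampThreshold r δ (∑ i, min (x i ^ 2) (r ^ 2)) = 0 :=
        rampThreshold_eq_zero _ _ _ hδ0 hL
      have hmem : x ∉ {y : Fin d → ℝ | Real.sqrt (∑ i, y i ^ 2) ≤ r} := by
        simp only [Set.mem_setOf_eq, not_le]
        calc r = Real.sqrt (r ^ 2) := (Real.sqrt_sq hr.le).symm
          _ < Real.sqrt (∑ i, x i ^ 2) := Real.sqrt_lt_sqrt (sq_nonneg r) hgt
      simp only [hF, hramp, Set.indicator_of_notMem hmem]
      norm_num
  have key := integral_le_measure (μ := μ) h1 h2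
  have hnonneg : 0 ≤ ∫ x, F x ∂μ := integral_nonneg fun x => sq_nonneg _
  have := ENNReal.toReal_mono (measure_ne_top μ s) key
  rwa [ENNReal.toReal_ofReal hnonneg] at this
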